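/- Let λ ∈ ℂ be a primitive 3rd root of unity, and let G ∈ ℂ[x,y,z,w] be homogeneous of degree 3 such that the only common zero in ℂ⁴ of the four partial derivatives of G is the origin. Suppose that there exists μ ∈ ℂ with G(λx, y, z, w) = μ·G(x, y, z, w). Then there exist a ∈ ℂ with a ≠ 0 and a homogeneous cubic F ∈ ℂ[y,z,w] such that G(x,y,z,w) = a·x³ + F(y,z,w). -/

import Mathlib

/-!
STATEMENT 9: Let λ be a primitive 3rd root of unity and G ∈ ℂ[x,y,z,w]
homogeneous of degree 3 with the origin as only common zero of its partial
derivatives. If G(λx,y,z,w) = μ·G(x,y,z,w) for some μ ∈ ℂ, then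
G = a·x³ + F(y,z,w) with a ≠ 0 and F a homogeneous cubic in y,z,w.
-/

open MvPolynomial

private lemma coeff_scaleX (lam : ℂ) (G : MvPolynomial (Fin 4) ℂ) :
    ∀ d : Fin 4 →₀ ℕ,
      coeff d (aeval (fun i : Fin 4 => if i = 0 then C lam * X 0 else X i) G)
        = lam ^ (d 0) * coeff d G := by
  induction G using MvPolynomial.induction_on with
  | C a =>
      intro d
      rw [aeval_C, MvPolynomial.algebraMap_eq, coeff_C]
      split_ifs with h
      · rw [← h]
        simp
      · rw [mul_zero]
  | add p q hp hq =>
      intro d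
      rw [map_add, coeff_add, hp, hq, coeff_add, mul_add]
  | mul_X p i hp =>
      intro d
      rw [map_mul, aeval_X]
      by_cases hi : i = 0
      · subst hi
        rw [if_pos rfl,
          show (aeval (fun i : Fin 4 => if i = 0 then C lam * X 0 else X i) p) *
              (C lam * X 0)
            = C lam * ((aeval (fun i : Fin 4 => if i = 0 then C lam * X 0 else X i) p) * X 0)
            from by ring,
          coeff_C_mul, coeff_mul_X', coeff_mul_X']
        by_cases h0 : (0 : Fin 4) ∈ d.support
        · rw [if_pos h0, if_pos h0, hp]
          have hd0 : d 0 ≠ 0 := Finsupp.mem_support_iff.mp h0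
          have key : lam * lam ^ ((d - Finsupp.single 0 1 : Fin 4 →₀ ℕ) 0) = lam ^ (d 0) := by
            rw [Finsupp.tsub_apply, Finsupp.single_eq_same, ← pow_succ']
            congr 1
            omega
          rw [← mul_assoc, key]
        · rw [if_neg h0, if_neg h0, mul_zero, mul_zero]
      · rw [if_neg hi, coeff_mul_X', coeff_mul_X']
        by_cases h0 : i ∈ d.support
        · rw [if_pos h0, if_pos h0, hp]
          have : (d - Finsupp.single i 1 : Fin 4 →₀ ℕ) 0 = d 0 := by
            rw [Finsupp.tsub_apply, Finsupp.single_apply, if_neg hi, Nat.sub_zero]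
          rw [this]
        · rw [if_neg h0, if_neg h0, mul_zero]

private lemma eval_pderiv_zero (v : Fin 4 → ℂ) (G : MvPolynomial (Fin 4) ℂ) (i : Fin 4)
    (h : ∀ d ∈ G.support, d i = 0 ∨ ∃ j, v j = 0 ∧ (d - Finsupp.single i 1 : Fin 4 →₀ ℕ) j ≠ 0) :
    eval v (pderiv i G) = 0 := by
  conv_lhs => rw [G.as_sum]
  rw [map_sum, map_sum]
  refine Finset.sum_eq_zero fun d hd => ?_
  rw [pderiv_monomial, eval_monomial]
  rcases h d hd with h0 | ⟨j, hvj, hj⟩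
  · rw [h0]
    simp
  · refine mul_eq_zero_of_right _ ?_
    rw [Finsupp.prod]
    exact Finset.prod_eq_zero (Finsupp.mem_support_iff.mpr hj)
      (by rw [hvj]; exact zero_pow hj)

private lemma aux_j (d : Fin 4 →₀ ℕ) (i : Fin 4) (h2 : 2 ≤ d 1 + d 2 + d 3) :
    ∃ j : Fin 4, j ≠ 0 ∧ (d - Finsupp.single i 1 : Fin 4 →₀ ℕ) j ≠ 0 := by
  by_contra hcon
  push_neg at hcon
  have e1 := hcon 1 (by decide)
  have e2 := hcon 2 (by decide)
  have e3 := hcon 3 (by decide)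
  rw [Finsupp.tsub_apply] at e1 e2 e3
  have hs : Finsupp.single i (1 : ℕ) 1 + Finsupp.single i (1 : ℕ) 2
      + Finsupp.single i (1 : ℕ) 3 ≤ 1 := by
    fin_cases i <;> simp [Finsupp.single_apply]
  omega

private lemma degree_fin4 (d : Fin 4 →₀ ℕ) :
    Finsupp.degree d = d 0 + d 1 + d 2 + d 3 := by
  rw [Finsupp.degree_apply,
    Finset.sum_subset (Finset.subset_univ _)
      (fun j _ hj => Finsupp.notMem_support_iff.mp hj),
    Fin.sum_univ_four]

theorem invariant_smooth_cubic_has_normal_form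
    (lam : ℂ) (hlam : IsPrimitiveRoot lam 3)
    (G : MvPolynomial (Fin 4) ℂ) (hG : G.IsHomogeneous 3)
    (hsmooth : ∀ v : Fin 4 → ℂ,
      (∀ i : Fin 4, eval v (pderiv i G) = 0) → v = 0)
    (μ : ℂ)
    (hinv : aeval (fun i : Fin 4 => if i = 0 then C lam * X 0 else X i) G = C μ * G) :
    ∃ a : ℂ, a ≠ 0 ∧ ∃ F : MvPolynomial (Fin 3) ℂ, F.IsHomogeneous 3 ∧
      G = C a * X 0 ^ 3 + rename Fin.succ F := by
  classical
  have hcoeff : ∀ d : Fin 4 →₀ ℕ, lam ^ (d 0) * coeff d G = μ * coeff d G := by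
    intro d
    have h := congrArg (coeff d) hinv
    rwa [coeff_scaleX, coeff_C_mul] at h
  have hsum : ∀ d ∈ G.support, d 0 + d 1 + d 2 + d 3 = 3 := by
    intro d hd
    have h3 : Finsupp.degree d = 3 := by
      rw [Finsupp.degree_eq_weight_one]
      exact hG (mem_support_iff.mp hd)
    rwa [degree_fin4] at h3
  have hGne : G ≠ 0 := by
    intro h0
    have hz := hsmooth (fun j => if j = 0 then 1 else 0)
      (fun i => by rw [h0, map_zero, map_zero])
    have := congrFun hz 0
    simp at this
  obtain ⟨d0, hd0⟩ := support_nonempty.mpr hGne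
  have hmu : μ = lam ^ (d0 0 % 3) := by
    have h := mul_right_cancel₀ (mem_support_iff.mp hd0) (hcoeff d0)
    rw [← h]
    exact pow_eq_pow_mod _ hlam.pow_eq_one
  have hmod : ∀ d ∈ G.support, d 0 % 3 = d0 0 % 3 := by
    intro d hd
    have heq : lam ^ (d 0) = μ :=
      mul_right_cancel₀ (mem_support_iff.mp hd) (hcoeff d)
    rw [hmu, pow_eq_pow_mod _ hlam.pow_eq_one] at heq
    exact hlam.pow_inj (Nat.mod_lt _ (by norm_num)) (Nat.mod_lt _ (by norm_num)) heq
  have hr3 : d0 0 % 3 = 0 ∨ d0 0 % 3 = 1 ∨ d0 0 % 3 = 2 := by omega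
  rcases hr3 with hr | hr | hr
  · -- μ = 1 case : only x-degrees 0 and 3 appear
    have hd03 : ∀ d ∈ G.support, d 0 = 0 ∨ d = Finsupp.single 0 3 := by
      intro d hd
      have h1 := hmod d hd
      have h2 := hsum d hd
      rw [hr] at h1
      have hcase : d 0 = 0 ∨ d 0 = 3 := by omega
      rcases hcase with h | h
      · exact Or.inl h
      · refine Or.inr ?_
        have e1 : d 1 = 0 := by omega
        have e2 : d 2 = 0 := by omega
        have e3 : d 3 = 0 := by omega
        ext j
        rcases Fin.eq_zero_or_eq_succ j with rfl | ⟨k, rfl⟩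
        · rw [Finsupp.single_eq_same]; exact h
        · rw [Finsupp.single_apply, if_neg (Ne.symm (Fin.succ_ne_zero k))]
          fin_cases k
          · exact e1
          · exact e2
          · exact e3
    set a := coeff (Finsupp.single 0 3) G with ha
    have hane : a ≠ 0 := by
      intro h0
      have hall0 : ∀ d ∈ G.support, d 0 = 0 := by
        intro d hd
        rcases hd03 d hd with h | h
        · exact h
        · exfalso
          apply mem_support_iff.mp hd
          rw [h, ← ha]
          exact h0
      have hvz : ∀ i, eval (fun j : Fin 4 => if j = 0 then (1 : ℂ) else 0) (pderiv i G) = 0 := by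
        intro i
        apply eval_pderiv_zero
        intro d hd
        by_cases hdi : d i = 0
        · exact Or.inl hdi
        · refine Or.inr ?_
          obtain ⟨j, hj0, hj⟩ := aux_j d i
            (by have := hsum d hd; have := hall0 d hd; omega)
          exact ⟨j, by simp [hj0], hj⟩
      have := congrFun (hsmooth _ hvz) 0
      simp at this
    refine ⟨a, hane, ?_⟩
    have hhom3 : (C a * X 0 ^ 3 : MvPolynomial (Fin 4) ℂ).IsHomogeneous 3 :=
      isHomogeneous_C_mul_X_pow a 0 3
    have hG' : (G - C a * X 0 ^ 3).IsHomogeneous 3 := hG.sub hhom3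
    have hsupp' : ∀ d ∈ (G - C a * X 0 ^ 3).support, d 0 = 0 := by
      intro d hd
      rw [mem_support_iff, coeff_sub, coeff_C_mul, X_pow_eq_monomial, coeff_monomial] at hd
      by_cases hds : d = Finsupp.single 0 3
      · exfalso
        apply hd
        rw [hds, if_pos rfl, mul_one, ← ha, sub_self]
      · rw [if_neg (fun h => hds h.symm), mul_zero, sub_zero] at hd
        rcases hd03 d (mem_support_iff.mpr hd) with h | h
        · exact h
        · exact absurd h hds
    have hvars : ↑(G - C a * X 0 ^ 3).vars ⊆ Set.range (Fin.succ : Fin 3 → Fin 4) := by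
      intro j hj
      rw [Finset.mem_coe, mem_vars] at hj
      obtain ⟨d, hd, hjd⟩ := hj
      have hj0 : j ≠ 0 := by
        intro h
        subst h
        exact (Finsupp.mem_support_iff.mp hjd) (hsupp' d hd)
      exact Fin.exists_succ_eq.mpr hj0
    obtain ⟨F, hF⟩ := exists_rename_eq_of_vars_subset_range _ _ (Fin.succ_injective 3) hvars
    refine ⟨F, ?_, ?_⟩
    · rw [← MvPolynomial.IsHomogeneous.rename_isHomogeneous_iff (Fin.succ_injective 3), hF]
      exact hG'
    · rw [hF]
      ring
  · -- μ = λ case : impossible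
    exfalso
    have hd01 : ∀ d ∈ G.support, d 0 = 1 := by
      intro d hd
      have h1 := hmod d hd
      have h2 := hsum d hd
      rw [hr] at h1
      omega
    have hvz : ∀ i, eval (fun j : Fin 4 => if j = 0 then (1 : ℂ) else 0) (pderiv i G) = 0 := by
      intro i
      apply eval_pderiv_zero
      intro d hd
      by_cases hdi : d i = 0
      · exact Or.inl hdi
      · refine Or.inr ?_
        obtain ⟨j, hj0, hj⟩ := aux_j d i
          (by have := hsum d hd; have := hd01 d hd; omega)
        exact ⟨j, by simp [hj0], hj⟩
    have := congrFun (hsmooth _ hvz) 0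
    simp at this
  · -- μ = λ² case : impossible
    exfalso
    have hd02 : ∀ d ∈ G.support, d 0 = 2 := by
      intro d hd
      have h1 := hmod d hd
      have h2 := hsum d hd
      rw [hr] at h1
      omega
    have hvz : ∀ i, eval (fun j : Fin 4 => if j = 1 then (1 : ℂ) else 0) (pderiv i G) = 0 := by
      intro i
      apply eval_pderiv_zero
      intro d hd
      refine Or.inr ⟨0, by norm_num, ?_⟩
      rw [Finsupp.tsub_apply]
      have hsle : Finsupp.single i (1 : ℕ) 0 ≤ 1 := by
        rw [Finsupp.single_apply]
        split <;> omega
      have := hd02 d hd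
      omega
    have := congrFun (hsmooth _ hvz) 1
    simp at this
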